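/- (Uncertainty principle) If X ∈ ℝ^{m×n} is a nonzero matrix, then taking X̄_S = X̄_L = X in the definitions of α and β, one has inf_{ρ>0} α(ρ)β(ρ) ≥ 1. In other words, a nonzero matrix cannot simultaneously have small sparsity measure α(ρ) and small singular-vector incoherence β(ρ) with α(ρ)β(ρ) < 1 for any ρ. -/

import Mathlib

open scoped BigOperators
open Matrix
noncomputable section

namespace SLR

/-- Trace inner product `⟨A,B⟩ = tr(AᵀB)`. -/
def inner' {m n : ℕ} (A B : Matrix (Fin m) (Fin n) ℝ) : ℝ := ∑ i, ∑ j, A i j * B i j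

/-- Entrywise 1-norm. -/
def l1 {m n : ℕ} (M : Matrix (Fin m) (Fin n) ℝ) : ℝ := ∑ i, ∑ j, |M i j|

/-- Entrywise ∞-norm (maximum absolute value of an entry). -/
def linf {m n : ℕ} (M : Matrix (Fin m) (Fin n) ℝ) : ℝ := ⨆ i, ⨆ j, |M i j|

/-- Frobenius norm. -/
def frob {m n : ℕ} (M : Matrix (Fin m) (Fin n) ℝ) : ℝ :=
  Real.sqrt (∑ i, ∑ j, (M i j) ^ 2)

/-- `‖M‖_{1→1}`: maximum column absolute sum. -/
def n11 {m n : ℕ} (M : Matrix (Fin m) (Fin n) ℝ) : ℝ := ⨆ j, ∑ i, |M i j|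

/-- `‖M‖_{∞→∞}`: maximum row absolute sum. -/
def nII {m n : ℕ} (M : Matrix (Fin m) (Fin n) ℝ) : ℝ := ⨆ i, ∑ j, |M i j|

/-- Spectral norm `‖M‖_{2→2}`. -/
def spec {m n : ℕ} (M : Matrix (Fin m) (Fin n) ℝ) : ℝ :=
  ‖LinearMap.toContinuousLinearMap (Matrix.toEuclideanLin M)‖

/-- Trace (nuclear) norm: sum of singular values. -/
def traceNorm {m n : ℕ} (M : Matrix (Fin m) (Fin n) ℝ) : ℝ :=
  ∑ i, Real.sqrt ((show (Mᵀ * M).IsHermitian by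
    simpa using Matrix.isHermitian_conjTranspose_mul_self M).eigenvalues i)

/-- The hybrid norm `‖M‖_{♯(ρ)} = max{ρ‖M‖_{1→1}, ρ⁻¹‖M‖_{∞→∞}}`. -/
def sharp {m n : ℕ} (ρ : ℝ) (M : Matrix (Fin m) (Fin n) ℝ) : ℝ :=
  max (ρ * n11 M) (ρ⁻¹ * nII M)

/-- The dual norm `‖·‖_{♭(ρ)}` of `‖·‖_{♯(ρ)}`. -/
def flat {m n : ℕ} (ρ : ℝ) (M : Matrix (Fin m) (Fin n) ℝ) : ℝ :=
  sSup {x : ℝ | ∃ N : Matrix (Fin m) (Fin n) ℝ, sharp ρ N ≤ 1 ∧ x = inner' M N}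

/-- Induced operator norm of a map `T` with respect to the norm `f`. -/
def opNormWrt {m n : ℕ} (f : Matrix (Fin m) (Fin n) ℝ → ℝ)
    (T : Matrix (Fin m) (Fin n) ℝ → Matrix (Fin m) (Fin n) ℝ) : ℝ :=
  sSup {x : ℝ | ∃ M, f M ≤ 1 ∧ x = f (T M)}

/-- Entrywise sign matrix. -/
def signM {m n : ℕ} (M : Matrix (Fin m) (Fin n) ℝ) : Matrix (Fin m) (Fin n) ℝ :=
  Matrix.of fun i j => Real.sign (M i j)

/-- Orthogonal projection onto matrices supported on `supp X`. -/
def POmega {m n : ℕ} (X : Matrix (Fin m) (Fin n) ℝ) (M : Matrix (Fin m) (Fin n) ℝ) :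
    Matrix (Fin m) (Fin n) ℝ :=
  Matrix.of fun i j => if X i j ≠ 0 then M i j else 0

/-- Orthogonal projection onto the tangent space `T` determined by `U`, `V`. -/
def PT {m n r : ℕ} (U : Matrix (Fin m) (Fin r) ℝ) (V : Matrix (Fin n) (Fin r) ℝ)
    (M : Matrix (Fin m) (Fin n) ℝ) : Matrix (Fin m) (Fin n) ℝ :=
  U * Uᵀ * M + M * (V * Vᵀ) - U * Uᵀ * M * (V * Vᵀ)

/-- `‖U‖_{2→∞}`: maximum row Euclidean norm. -/
def two2inf {m r : ℕ} (U : Matrix (Fin m) (Fin r) ℝ) : ℝ :=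
  ⨆ i, Real.sqrt (∑ k, (U i k) ^ 2)

/-- The sparsity measure `α(ρ)` of `X̄_S`. -/
def alpha {m n : ℕ} (X : Matrix (Fin m) (Fin n) ℝ) (ρ : ℝ) : ℝ :=
  max (ρ * n11 (signM X)) (ρ⁻¹ * nII (signM X))

/-- The incoherence measure `β(ρ)` of the singular vectors `U`, `V`. -/
def beta {m n r : ℕ} (U : Matrix (Fin m) (Fin r) ℝ) (V : Matrix (Fin n) (Fin r) ℝ)
    (ρ : ℝ) : ℝ :=
  ρ⁻¹ * linf (U * Uᵀ) + ρ * linf (V * Vᵀ) + two2inf U * two2inf V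

/-- Number of nonzero entries. -/
def suppCard {m n : ℕ} (X : Matrix (Fin m) (Fin n) ℝ) : ℕ :=
  (Finset.univ.filter fun p : Fin m × Fin n => X p.1 p.2 ≠ 0).card


lemma le_linf_aux {m n : ℕ} (M : Matrix (Fin m) (Fin n) ℝ) (i : Fin m) (j : Fin n) :
    |M i j| ≤ linf M := by
  unfold linf
  have h1 : |M i j| ≤ ⨆ j', |M i j'| :=
    le_ciSup (f := fun j' => |M i j'|) (Set.Finite.bddAbove (Set.finite_range _)) j
  exact h1.trans (le_ciSup (f := fun i' => ⨆ j', |M i' j'|)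
    (Set.Finite.bddAbove (Set.finite_range _)) i)

lemma col_le_n11_aux {m n : ℕ} (M : Matrix (Fin m) (Fin n) ℝ) (j : Fin n) :
    (∑ i, |M i j|) ≤ n11 M :=
  le_ciSup (f := fun j' => ∑ i, |M i j'|) (Set.Finite.bddAbove (Set.finite_range _)) j

/-- uncertainty principle, a nonzero matrix has `α(ρ)β(ρ) ≥ 1` for all ρ. -/
theorem uncertainty_principle {m n r : ℕ} (X : Matrix (Fin m) (Fin n) ℝ) (hX : X ≠ 0)
    (U : Matrix (Fin m) (Fin r) ℝ) (V : Matrix (Fin n) (Fin r) ℝ) (σ : Fin r → ℝ)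
    (hσ : ∀ i, 0 < σ i) (hU : Uᵀ * U = 1) (hV : Vᵀ * V = 1)
    (hsvd : X = U * Matrix.diagonal σ * Vᵀ) :
    ∀ ρ : ℝ, 0 < ρ → 1 ≤ alpha X ρ * beta U V ρ := by
  intro ρ hρ
  -- pick a nonzero entry, hence an entry of maximal absolute value
  obtain ⟨i0, hi0⟩ : ∃ i0, X i0 ≠ 0 := by
    by_contra h
    push_neg at h
    exact hX (funext fun i => h i)
  obtain ⟨j0, hj0⟩ : ∃ j0, X i0 j0 ≠ 0 := by
    by_contra h
    push_neg at h
    exact hi0 (funext fun j => h j)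
  have : Nonempty (Fin m × Fin n) := ⟨(i0, j0)⟩
  obtain ⟨⟨i, j⟩, hmax⟩ := Finite.exists_max (fun p : Fin m × Fin n => |X p.1 p.2|)
  have hXij : 0 < |X i j| := lt_of_lt_of_le (abs_pos.mpr hj0) (hmax (i0, j0))
  -- U Uᵀ X = X
  have h1 : U * Uᵀ * U = U := by rw [Matrix.mul_assoc, hU, Matrix.mul_one]
  have hPX : U * Uᵀ * X = X := by
    rw [hsvd]
    simp only [← Matrix.mul_assoc]
    rw [h1]
  set P := U * Uᵀ with hP
  set L := linf P with hL
  set N := n11 (signM X) with hN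
  have hL0 : 0 ≤ L := le_trans (abs_nonneg _) (le_linf_aux P i i)
  -- key entrywise identity
  have hXeq : X i j = ∑ k, P i k * X k j := by
    conv_lhs => rw [← hPX]
    rw [Matrix.mul_apply]
  -- bound each |X k j| by |sign| * max
  have hterm : ∀ k, |P i k * X k j| ≤ L * (|signM X k j| * |X i j|) := by
    intro k
    rw [abs_mul]
    have h2 : |X k j| ≤ |signM X k j| * |X i j| := by
      have hs : |signM X k j| * |X k j| = |X k j| := by
        show |Real.sign (X k j)| * |X k j| = |X k j|
        rcases lt_trichotomy (X k j) 0 with h | h | h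
        · rw [Real.sign_of_neg h]; simp
        · rw [h]; simp
        · rw [Real.sign_of_pos h]; simp
      calc |X k j| = |signM X k j| * |X k j| := hs.symm
        _ ≤ |signM X k j| * |X i j| :=
            mul_le_mul_of_nonneg_left (hmax (k, j)) (abs_nonneg _)
    exact mul_le_mul (le_linf_aux P i k) h2 (abs_nonneg _) hL0
  have hsum : |X i j| ≤ L * ((∑ k, |signM X k j|) * |X i j|) := by
    calc |X i j| = |∑ k, P i k * X k j| := by rw [← hXeq]
      _ ≤ ∑ k, |P i k * X k j| := Finset.abs_sum_le_sum_abs _ _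
      _ ≤ ∑ k, L * (|signM X k j| * |X i j|) := Finset.sum_le_sum fun k _ => hterm k
      _ = L * ((∑ k, |signM X k j|) * |X i j|) := by
          rw [Finset.sum_mul, Finset.mul_sum]
  have hcol : (∑ k, |signM X k j|) ≤ N := col_le_n11_aux _ j
  have hcol0 : 0 ≤ ∑ k, |signM X k j| := Finset.sum_nonneg fun k _ => abs_nonneg _
  have hN0 : 0 ≤ N := hcol0.trans hcol
  have hkey : 1 ≤ L * N := by
    have h3 : |X i j| ≤ L * (N * |X i j|) := by
      refine hsum.trans ?_
      have := mul_le_mul_of_nonneg_right hcol (le_of_lt hXij)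
      exact mul_le_mul_of_nonneg_left this hL0
    nlinarith
  -- nonnegativity of the remaining β terms
  have hlV : 0 ≤ linf (V * Vᵀ) := Real.iSup_nonneg fun a => Real.iSup_nonneg fun b => abs_nonneg _
  have ht2U : 0 ≤ two2inf U := Real.iSup_nonneg fun a => Real.sqrt_nonneg _
  have ht2V : 0 ≤ two2inf V := Real.iSup_nonneg fun a => Real.sqrt_nonneg _
  have halpha : ρ * N ≤ alpha X ρ := le_max_left _ _
  have hbeta : ρ⁻¹ * L + (ρ * linf (V * Vᵀ) + two2inf U * two2inf V) ≤ beta U V ρ := by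
    unfold beta
    rw [← hP, ← hL]
    ring_nf
    exact le_refl _
  have hρinv : 0 < ρ⁻¹ := inv_pos.mpr hρ
  have hρρ : ρ * ρ⁻¹ = 1 := mul_inv_cancel₀ (ne_of_gt hρ)
  have hα0 : 0 ≤ ρ * N := mul_nonneg (le_of_lt hρ) hN0
  have hβlb : ρ⁻¹ * L ≤ beta U V ρ := by
    refine le_trans ?_ hbeta
    nlinarith
  have hβ0 : 0 ≤ ρ⁻¹ * L := mul_nonneg (le_of_lt hρinv) hL0
  calc (1:ℝ) = 1 * 1 := by ring
    _ ≤ (ρ * N) * (ρ⁻¹ * L) := by nlinarith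
    _ ≤ alpha X ρ * beta U V ρ := mul_le_mul halpha hβlb hβ0 (hα0.trans halpha)


end SLR
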